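/- Let n ≥ 2 and 1 ≤ l ≤ n-1, and consider the transition law ζ₀ = u^{-n} ζ₁ + t_l u^{-l} with t_l ≠ 0. Then the new fiber coordinates ζ̃₀ = (u^l ζ₀ - t_l)/(t_l ζ₀) and ζ̃₁ = ζ₁/(t_l v^{n-l} ζ₁ + t_l²), where v = 1/u, satisfy the relation ζ̃₀ = v^{n-2l} ζ̃₁ on the overlap where both are defined. -/

import Mathlib

/-- For n ≥ 2, 1 ≤ l ≤ n-1, t_l ≠ 0, and the transition law
ζ₀ = u^{-n} ζ₁ + t_l u^{-l}, the new fiber coordinates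
ζ̃₀ = (u^l ζ₀ - t_l)/(t_l ζ₀) and ζ̃₁ = ζ₁/(t_l v^{n-l} ζ₁ + t_l²), with v = 1/u,
satisfy ζ̃₀ = v^{n-2l} ζ̃₁ wherever both are defined (v^{n-2l} taken as an integer power,
allowing n - 2l < 0). -/
theorem stmt_1 (n l : ℕ) (hn : 2 ≤ n) (hl : 1 ≤ l) (hln : l ≤ n - 1)
    (t : ℂ) (ht : t ≠ 0) (u ζ₀ ζ₁ : ℂ) (hu : u ≠ 0)
    (hglue : ζ₀ = ζ₁ / u ^ n + t / u ^ l)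
    (hζ₀ : ζ₀ ≠ 0)
    (hden : t * u⁻¹ ^ (n - l) * ζ₁ + t ^ 2 ≠ 0) :
    (u ^ l * ζ₀ - t) / (t * ζ₀)
      = u⁻¹ ^ ((n : ℤ) - 2 * l) * (ζ₁ / (t * u⁻¹ ^ (n - l) * ζ₁ + t ^ 2)) := by
  have hln' : l < n := by omega
  obtain ⟨k, hk⟩ : ∃ k, n = l + k := ⟨n - l, by omega⟩
  subst hk
  have hnl : l + k - l = k := by omega
  rw [hnl] at hden ⊢
  have h1 : u⁻¹ ^ ((((l:ℕ)+k : ℕ):ℤ) - 2 * l) = u⁻¹ ^ (k:ℤ) / u⁻¹ ^ (l:ℤ) := by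
    rw [← zpow_sub₀ (inv_ne_zero hu)]; push_cast; ring_nf
  rw [h1, zpow_natCast, zpow_natCast, inv_pow, inv_pow]
  have hupow : ∀ m : ℕ, u ^ m ≠ 0 := fun m => pow_ne_zero m hu
  field_simp at hden ⊢
  rw [hglue] at hζ₀ ⊢
  field_simp at hζ₀ ⊢
  ring_nf
  have hne : ζ₁ + u ^ k * t ≠ 0 := by
    intro h; apply hden
    have : ζ₁ = -(u ^ k * t) := by linear_combination h
    rw [this, one_div, inv_pow]; field_simp; ring
  field_simp
  ring
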